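/- Let A_q(z) = exp(−i·g·z·log q)·P(exp(i·z·log q)). Then every complex root x of P satisfies |x| = 1 if and only if for every real ω > 0 the entire function z ↦ A_q(z + iω) belongs to the Hermite–Biehler class. -/

import Mathlib

open Complex

/-- The self-reciprocal polynomial `P(x) = Σ_{k=0}^{g-1} c_k (x^{2g-k} + x^k) + c_g x^g`,
viewed as a function on `ℂ`. -/
noncomputable def Pfun (g : ℕ) (c : ℕ → ℝ) (x : ℂ) : ℂ :=
  ∑ k ∈ Finset.range g, (c k : ℂ) * (x ^ (2*g - k) + x ^ k) + (c g : ℂ) * x ^ g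

/-- `A_q(z) = exp(-i g z log q) · P(exp(i z log q))`. -/
noncomputable def Aq (g : ℕ) (c : ℕ → ℝ) (q : ℝ) (z : ℂ) : ℂ :=
  Complex.exp (-(Complex.I * (g : ℂ) * z * (Real.log q : ℂ))) *
    Pfun g c (Complex.exp (Complex.I * z * (Real.log q : ℂ)))

/-- An entire function `F` belongs to the Hermite–Biehler class if `|F♯(z)| < |F(z)|`
for every `z` in the open upper half-plane, where `F♯(z) = conj (F (conj z))`, and `F`
has no zeros on the real axis. -/
def HermiteBiehler (F : ℂ → ℂ) : Prop :=
  Differentiable ℂ F ∧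
  (∀ z : ℂ, 0 < z.im →
    ‖(starRingEnd ℂ) (F ((starRingEnd ℂ) z))‖ < ‖F z‖) ∧
  ∀ x : ℝ, F (x : ℂ) ≠ 0


section Aux
open Polynomial in

lemma Pfun_exists_root (g : ℕ) (hg : 1 ≤ g) (c : ℕ → ℝ) (hc0 : c 0 ≠ 0) :
    ∃ α : ℂ, Pfun g c α = 0 := by
  set p : Polynomial ℂ :=
    ∑ k ∈ Finset.range g, C (c k : ℂ) * (X ^ (2*g - k) + X ^ k) + C (c g : ℂ) * X ^ g with hp
  have heval : ∀ x : ℂ, p.eval x = Pfun g c x := by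
    intro x
    simp [hp, Pfun, eval_finset_sum]
  have hcoeff : p.coeff (2*g) = (c 0 : ℂ) := by
    rw [hp, coeff_add, finset_sum_coeff]
    rw [Finset.sum_eq_single 0]
    · simp only [coeff_C_mul, coeff_add, coeff_X_pow]
      have h1 : 2*g - 0 = 2*g := by omega
      have h2 : ¬ (2*g = 0) := by omega
      rw [h1]
      simp [h2, show g ≠ 0 by omega, show ¬ (2*g = g) by omega]
    · intro k hk hk0
      simp only [Finset.mem_range] at hk
      simp only [coeff_C_mul, coeff_add, coeff_X_pow]
      simp [show ¬ (2*g = 2*g - k) by omega, show ¬ (2*g = k) by omega]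
    · intro h; simp at h; omega
  have hdeg : 0 < p.degree := by
    have := le_degree_of_ne_zero (n := 2*g) (by rw [hcoeff]; exact_mod_cast hc0)
    calc (0 : WithBot ℕ) < (2*g : ℕ) := by exact_mod_cast (by omega : 0 < 2*g)
    _ ≤ p.degree := this
  obtain ⟨z, hz⟩ := Complex.exists_root hdeg
  exact ⟨z, by rw [← heval]; exact hz⟩


lemma Pfun_conj (g : ℕ) (c : ℕ → ℝ) (x : ℂ) :
    Pfun g c ((starRingEnd ℂ) x) = (starRingEnd ℂ) (Pfun g c x) := by
  simp [Pfun, map_add, map_mul, map_sum, map_pow, Complex.conj_ofReal]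

lemma Pfun_zero (g : ℕ) (hg : 1 ≤ g) (c : ℕ → ℝ) : Pfun g c 0 = c 0 := by
  have hgg : g ≠ 0 := by omega
  rw [Pfun]
  rw [Finset.sum_eq_single 0]
  · simp [hgg, zero_pow, Nat.sub_eq_zero_iff_le]
  · intro k hk hk0
    simp only [Finset.mem_range] at hk
    rw [zero_pow hk0, zero_pow (show 2*g - k ≠ 0 by omega)]
    ring
  · intro h; simp at h; omega

lemma Pfun_fe (g : ℕ) (c : ℕ → ℝ) (x : ℂ) (hx : x ≠ 0) :
    Pfun g c x⁻¹ * x ^ (2*g) = Pfun g c x := by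
  have aux : ∀ n, n ≤ 2*g → (x⁻¹) ^ n * x ^ (2*g) = x ^ (2*g - n) := by
    intro n hn
    rw [inv_pow, inv_mul_eq_div, eq_comm, pow_sub₀ x hx hn]; exact (div_eq_mul_inv _ _).symm
  rw [Pfun, Pfun, add_mul, Finset.sum_mul]
  congr 1
  · apply Finset.sum_congr rfl
    intro k hk
    simp only [Finset.mem_range] at hk
    rw [mul_assoc, add_mul, aux _ (by omega), aux _ (by omega)]
    have : 2*g - (2*g - k) = k := by omega
    rw [this, add_comm]
  · rw [mul_assoc, aux g (by omega)]
    have : 2*g - g = g := by omega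
    rw [this]

lemma Pfun_diff (g : ℕ) (c : ℕ → ℝ) : Differentiable ℂ (Pfun g c) := by
  unfold Pfun
  apply Differentiable.add
  · apply Differentiable.fun_sum
    intro k _
    exact (differentiable_const _).mul ((differentiable_pow _).add (differentiable_pow _))
  · exact (differentiable_const _).mul (differentiable_pow _)

lemma key_lemma (g : ℕ) (hg : 1 ≤ g) (c : ℕ → ℝ) (hc0 : c 0 ≠ 0)
    (hroots : ∀ x : ℂ, Pfun g c x = 0 → ‖x‖ = 1)
    (t : ℝ) (ht : 1 < t) (w : ℂ) (hw : ‖w‖ < 1) :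
    ‖Pfun g c (w * t)‖ < t^(2*g) * ‖Pfun g c (w / t)‖ := by
  have ht0 : (0:ℝ) < t := by linarith
  have htC : (t:ℂ) ≠ 0 := by exact_mod_cast ht0.ne'
  have hT : ((t:ℂ))^(2*g) ≠ 0 := pow_ne_zero _ htC
  have hden : ∀ u : ℂ, ‖u‖ < t → Pfun g c (u / t) ≠ 0 := by
    intro u hu h
    have h1 := hroots _ h
    rw [norm_div, Complex.norm_of_nonneg ht0.le, div_eq_one_iff_eq ht0.ne'] at h1
    rw [h1] at hu; exact lt_irrefl _ hu
  set f : ℂ → ℂ := fun u => Pfun g c (u * t) / (((t:ℂ))^(2*g) * Pfun g c (u / t)) with hf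
  have hfd : DifferentiableOn ℂ f (Metric.ball (0:ℂ) t) := by
    apply DifferentiableOn.div
    · exact ((Pfun_diff g c).comp (differentiable_id.mul (differentiable_const _))).differentiableOn
    · exact (((Pfun_diff g c).comp (differentiable_id.div_const _)).const_mul _).differentiableOn
    · intro u hu
      simp only [Metric.mem_ball, Complex.dist_eq, sub_zero] at hu
      exact mul_ne_zero hT (hden u hu)
  have hsub : closure (Metric.ball (0:ℂ) 1) ⊆ Metric.ball (0:ℂ) t := by
    rw [closure_ball (0:ℂ) one_ne_zero]
    exact Metric.closedBall_subset_ball ht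
  have hbd : ∀ u ∈ frontier (Metric.ball (0:ℂ) 1), ‖f u‖ ≤ 1 := by
    intro u hu
    rw [frontier_ball (0:ℂ) one_ne_zero, mem_sphere_zero_iff_norm] at hu
    have hu1 : ‖u‖ = 1 := hu
    have hune : u ≠ 0 := by intro h; rw [h] at hu1; simp at hu1
    have hut : u * t ≠ 0 := mul_ne_zero hune htC
    -- |P(u/t)| * t^(2g) = |P(ut)|
    have hconj : u / (t:ℂ) = (starRingEnd ℂ) ((u * t)⁻¹) := by
      rw [mul_inv, map_mul, map_inv₀, map_inv₀, Complex.conj_ofReal,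
        ← Complex.inv_eq_conj hu1, inv_inv, div_eq_mul_inv]
    have habs : ‖Pfun g c (u / t)‖ * t^(2*g) = ‖Pfun g c (u * t)‖ := by
      rw [hconj, Pfun_conj, Complex.norm_conj]
      have := congrArg (‖·‖) (Pfun_fe g c (u*t) hut)
      rw [norm_mul, norm_pow, norm_mul, Complex.norm_of_nonneg ht0.le, hu1, one_mul] at this
      exact this
    have hdne : Pfun g c (u / t) ≠ 0 := hden u (by rw [hu1]; exact ht)
    have : ‖f u‖ = 1 := by
      rw [hf]
      simp only [norm_div, norm_mul, norm_pow, Complex.norm_of_nonneg ht0.le]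
      rw [← habs]
      rw [div_eq_one_iff_eq (ne_of_gt (mul_pos (pow_pos ht0 _) (norm_pos_iff.mpr hdne)))]
      ring
    rw [this]
  have hdc : DiffContOnCl ℂ f (Metric.ball (0:ℂ) 1) :=
    (hfd.mono hsub).diffContOnCl
  have hwball : w ∈ Metric.ball (0:ℂ) 1 := by
    simp only [Metric.mem_ball, Complex.dist_eq, sub_zero]; exact hw
  have hle : ‖f w‖ ≤ 1 :=
    Complex.norm_le_of_forall_mem_frontier_norm_le Metric.isBounded_ball hdc hbd
      (subset_closure hwball)
  -- strictness
  obtain ⟨α, hα⟩ := Pfun_exists_root g hg c hc0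
  have hα1 : ‖α‖ = 1 := hroots α hα
  set z₀ : ℂ := α / t with hz₀
  have hz₀ball : z₀ ∈ Metric.ball (0:ℂ) 1 := by
    simp only [Metric.mem_ball, Complex.dist_eq, sub_zero, hz₀, norm_div, Complex.norm_of_nonneg ht0.le,
      hα1]
    rw [div_lt_one ht0]; exact ht
  have hfz₀ : f z₀ = 0 := by
    rw [hf]
    simp only [hz₀, div_mul_cancel₀ _ htC, hα, zero_div]
  have hlt : ‖f w‖ < 1 := by
    rcases lt_or_eq_of_le hle with h | h
    · exact h
    · exfalso
      have hmax : IsMaxOn (norm ∘ f) (Metric.ball (0:ℂ) 1) w := by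
        intro y hy
        simp only [Function.comp_apply, Set.mem_setOf_eq, h]
        exact Complex.norm_le_of_forall_mem_frontier_norm_le Metric.isBounded_ball hdc hbd
          (subset_closure hy)
      have heq := Complex.eqOn_of_isPreconnected_of_isMaxOn_norm
        (convex_ball (0:ℂ) 1).isPreconnected Metric.isOpen_ball
        (hfd.mono (Metric.ball_subset_ball ht.le)) hwball hmax
      have := heq hz₀ball
      rw [hfz₀, Function.const_apply] at this
      rw [← this] at h
      simp at h
  -- unfold
  have hD : ‖((t:ℂ))^(2*g) * Pfun g c (w / t)‖ =
      t^(2*g) * ‖Pfun g c (w / t)‖ := by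
    rw [norm_mul, norm_pow, Complex.norm_of_nonneg ht0.le]
  have hDpos : 0 < ‖((t:ℂ))^(2*g) * Pfun g c (w / t)‖ := by
    rw [hD]
    exact mul_pos (by positivity) (norm_pos_iff.mpr (hden w (by linarith)))
  rw [hf] at hlt
  simp only [norm_div] at hlt
  rw [div_lt_one hDpos] at hlt
  rw [hD] at hlt
  exact hlt

lemma Aq_diff (g : ℕ) (c : ℕ → ℝ) (q : ℝ) : Differentiable ℂ (Aq g c q) := by
  unfold Aq
  apply Differentiable.mul
  · apply Complex.differentiable_exp.comp
    fun_prop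
  · apply (Pfun_diff g c).comp
    apply Complex.differentiable_exp.comp
    fun_prop

lemma Aq_conj (g : ℕ) (c : ℕ → ℝ) (q : ℝ) (u : ℂ) :
    (starRingEnd ℂ) (Aq g c q ((starRingEnd ℂ) u)) = Aq g c q u := by
  set L : ℝ := Real.log q with hL
  set E : ℂ := Complex.exp (I * u * L) with hE
  have hEne : E ≠ 0 := Complex.exp_ne_zero _
  rw [Aq, Aq, map_mul, ← Complex.exp_conj, ← Pfun_conj, ← Complex.exp_conj]
  have h1 : (starRingEnd ℂ) (-(I * (g:ℂ) * ((starRingEnd ℂ) u) * (L:ℂ))) =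
      I * (g:ℂ) * u * (L:ℂ) := by
    simp only [map_neg, map_mul, Complex.conj_I, Complex.conj_conj, Complex.conj_ofReal,
      map_natCast]
    ring
  have h2 : (starRingEnd ℂ) (I * ((starRingEnd ℂ) u) * (L:ℂ)) = -(I * u * L) := by
    simp only [map_mul, Complex.conj_I, Complex.conj_conj, Complex.conj_ofReal]
    ring
  rw [h1, h2, Complex.exp_neg, ← hE]
  have h3 : Pfun g c E⁻¹ = Pfun g c E * (E ^ (2*g))⁻¹ := by
    rw [eq_comm, mul_comm, inv_mul_eq_div, div_eq_iff (pow_ne_zero _ hEne), Pfun_fe g c E hEne]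
  rw [h3]
  have h4 : Complex.exp (I * (g:ℂ) * u * L) * (E ^ (2*g))⁻¹ =
      Complex.exp (-(I * (g:ℂ) * u * L)) := by
    rw [hE, ← Complex.exp_nat_mul, eq_comm, ← Complex.exp_neg, ← Complex.exp_add]
    congr 1
    push_cast
    ring
  calc Complex.exp (I * (g:ℂ) * u * L) * (Pfun g c E * (E ^ (2*g))⁻¹)
      = (Complex.exp (I * (g:ℂ) * u * L) * (E ^ (2*g))⁻¹) * Pfun g c E := by ring
    _ = Complex.exp (-(I * (g:ℂ) * u * L)) * Pfun g c E := by rw [h4]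

lemma Aq_abs (g : ℕ) (c : ℕ → ℝ) (q : ℝ) (u : ℂ) :
    ‖Aq g c q u‖ =
      Real.exp ((g:ℝ) * Real.log q * u.im) *
        ‖Pfun g c (Complex.exp (I * u * (Real.log q : ℂ)))‖ := by
  rw [Aq, norm_mul, Complex.norm_exp]
  congr 2
  simp [Complex.mul_re, Complex.mul_im]
  ring

end Aux

theorem stmt11 (g : ℕ) (hg : 1 ≤ g) (q : ℝ) (hq : 1 < q) (c : ℕ → ℝ) (hc0 : c 0 ≠ 0) :
    (∀ x : ℂ, Pfun g c x = 0 → ‖x‖ = 1) ↔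
    (∀ ω : ℝ, 0 < ω →
      HermiteBiehler (fun z => Aq g c q (z + Complex.I * (ω : ℂ)))) := by
  have hL : 0 < Real.log q := Real.log_pos hq
  set L : ℝ := Real.log q with hLdef
  constructor
  · intro hroots ω hω
    set t : ℝ := Real.exp (ω * L) with htdef
    have ht : 1 < t := by
      rw [htdef, ← Real.exp_zero]
      exact Real.exp_lt_exp.mpr (by positivity)
    have ht0 : (0:ℝ) < t := by linarith
    -- helper: exp (I * (z ± I ω) * L)
    have eplus : ∀ z : ℂ, Complex.exp (I * (z + I * ω) * L) =
        Complex.exp (I * z * L) / (t:ℂ) := by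
      intro z
      rw [htdef, Complex.ofReal_exp, div_eq_mul_inv, ← Complex.exp_neg, ← Complex.exp_add]
      congr 1
      push_cast
      linear_combination (ω * L : ℂ) * Complex.I_mul_I
    have eminus : ∀ z : ℂ, Complex.exp (I * (z - I * ω) * L) =
        Complex.exp (I * z * L) * (t:ℂ) := by
      intro z
      rw [htdef, Complex.ofReal_exp, ← Complex.exp_add]
      congr 1
      push_cast
      linear_combination (-(ω * L) : ℂ) * Complex.I_mul_I
    refine ⟨?_, ?_, ?_⟩
    · exact (Aq_diff g c q).comp (differentiable_id.add_const _)
    · intro z hz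
      simp only
      have hcz : (starRingEnd ℂ) z + I * (ω:ℂ) = (starRingEnd ℂ) (z - I * ω) := by
        rw [map_sub, map_mul, Complex.conj_I, Complex.conj_ofReal]
        ring
      rw [hcz, Aq_conj]
      rw [Aq_abs, Aq_abs, ← hLdef]
      rw [eplus z, eminus z]
      set E : ℂ := Complex.exp (I * z * L) with hE
      have hEabs : ‖E‖ < 1 := by
        rw [hE, Complex.norm_exp, Real.exp_lt_one_iff]
        have : (I * z * (L:ℂ)).re = -(z.im * L) := by
          simp [Complex.mul_re, Complex.mul_im]
        rw [this]
        nlinarith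
      have him1 : (z - I * (ω:ℂ)).im = z.im - ω := by
        simp
      have him2 : (z + I * (ω:ℂ)).im = z.im + ω := by
        simp
      rw [him1, him2]
      have hkey := key_lemma g hg c hc0 hroots t ht E hEabs
      have hfac : Real.exp ((g:ℝ) * L * (z.im - ω)) * t^(2*g) =
          Real.exp ((g:ℝ) * L * (z.im + ω)) := by
        rw [htdef, ← Real.exp_nat_mul, ← Real.exp_add]
        congr 1
        push_cast
        ring
      calc Real.exp ((g:ℝ) * L * (z.im - ω)) * ‖Pfun g c (E * t)‖
          < Real.exp ((g:ℝ) * L * (z.im - ω)) * (t^(2*g) * ‖Pfun g c (E / t)‖) :=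
            mul_lt_mul_of_pos_left hkey (Real.exp_pos _)
        _ = Real.exp ((g:ℝ) * L * (z.im + ω)) * ‖Pfun g c (E / t)‖ := by
            rw [← mul_assoc, hfac]
    · intro x
      simp only
      rw [Aq]
      apply mul_ne_zero (Complex.exp_ne_zero _)
      intro h
      have h1 := hroots _ h
      rw [← hLdef, Complex.norm_exp] at h1
      have hre : (I * ((x:ℂ) + I * (ω:ℂ)) * (L:ℂ)).re = -(ω * L) := by
        simp [Complex.mul_re, Complex.mul_im]
      rw [hre, Real.exp_eq_one_iff] at h1
      have : 0 < ω * L := by positivity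
      linarith [h1]
  · intro hHB x hx
    by_contra hne
    have hx0 : x ≠ 0 := by
      intro h
      rw [h, Pfun_zero g hg c] at hx
      exact hc0 (by exact_mod_cast hx)
    obtain ⟨y, hy, hy0, hy1⟩ : ∃ y : ℂ, Pfun g c y = 0 ∧ y ≠ 0 ∧ ‖y‖ < 1 := by
      rcases lt_or_gt_of_ne hne with h | h
      · exact ⟨x, hx, hx0, h⟩
      · refine ⟨x⁻¹, ?_, inv_ne_zero hx0, ?_⟩
        · have h2 := Pfun_fe g c x hx0
          rw [hx] at h2
          exact (mul_eq_zero.mp h2).resolve_right (pow_ne_zero _ hx0)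
        · rw [norm_inv]
          exact inv_lt_one_of_one_lt₀ h
    set ζ : ℂ := -(I * Complex.log y) * ((L:ℂ))⁻¹ with hζ
    have hLne : (L:ℂ) ≠ 0 := by exact_mod_cast hL.ne'
    have hexp : I * ζ * (L:ℂ) = Complex.log y := by
      rw [hζ]
      have hr : I * (-(I * Complex.log y) * ((L:ℂ))⁻¹) * (L:ℂ) =
          (-(I*I)) * Complex.log y * (((L:ℂ))⁻¹ * (L:ℂ)) := by ring
      rw [hr, Complex.I_mul_I, inv_mul_cancel₀ hLne]
      ring
    have him : ζ.im = -(Complex.log y).re * L⁻¹ := by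
      rw [hζ, ← Complex.ofReal_inv]
      simp [Complex.mul_im, Complex.mul_re]
    have hζim : 0 < ζ.im := by
      rw [him, Complex.log_re]
      have : Real.log ‖y‖ < 0 :=
        Real.log_neg (norm_pos_iff.mpr hy0) hy1
      have hLinv : 0 < L⁻¹ := inv_pos.mpr hL
      nlinarith
    set ω : ℝ := ζ.im / 2 with hω
    have hωpos : 0 < ω := by rw [hω]; linarith
    obtain ⟨_, hlt, _⟩ := hHB ω hωpos
    have hzim : 0 < (ζ - I * (ω:ℂ)).im := by
      have hsub : (ζ - I * (ω:ℂ)).im = ζ.im - ω := by simp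
      rw [hsub, hω]
      linarith
    have h := hlt (ζ - I * ω) hzim
    simp only at h
    rw [show ζ - I * (ω:ℂ) + I * (ω:ℂ) = ζ by ring] at h
    have hAζ : Aq g c q ζ = 0 := by
      rw [Aq, ← hLdef, show Complex.exp (I * ζ * (L:ℂ)) = y from by
        rw [hexp, Complex.exp_log hy0]]
      rw [hy, mul_zero]
    rw [hAζ] at h
    simp only [norm_zero] at h
    exact (norm_nonneg _).not_gt h
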